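/- Let μ be a fuzzy set of an MTL-algebra L. Then μ is an (∈̄,∈̄∨q̄)-fuzzy filter of L if and only if for every t ∈ (0.5, 1] the ∈-level set F(t) = {x ∈ L : μ(x) ≥ t} is either empty or a filter of L. -/
import Mathlib


/-- An MTL-algebra: a bounded lattice with `⊥ ≠ ⊤`, a product `odot` and residuum `rimp`,
where `odot` is associative, commutative and monotone in each argument, `⊤` is a unit,
the Galois correspondence holds and prelinearity holds. -/
class MTL (L : Type*) extends Lattice L, BoundedOrder L where
  odot : L → L → L
  rimp : L → L → L
  bot_ne_top : (⊥ : L) ≠ ⊤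
  odot_assoc : ∀ x y z : L, odot (odot x y) z = odot x (odot y z)
  odot_comm : ∀ x y : L, odot x y = odot y x
  odot_mono_left : ∀ x y z : L, x ≤ y → odot x z ≤ odot y z
  odot_mono_right : ∀ x y z : L, x ≤ y → odot z x ≤ odot z y
  odot_top : ∀ x : L, odot x ⊤ = x
  galois : ∀ x y z : L, odot x y ≤ z ↔ x ≤ rimp y z
  prelinear : ∀ x y : L, rimp x y ⊔ rimp y x = ⊤

open MTL

variable {L : Type*} [MTL L]

/-- A subset `A` is a filter: `1 ∈ A` and it is closed under modus ponens. -/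
def IsFilter' (A : Set L) : Prop :=
  (⊤ : L) ∈ A ∧ ∀ x y : L, x ∈ A → rimp x y ∈ A → y ∈ A

/-- An (∈̄,∈̄∨q̄)-fuzzy filter: `max(μ(1), 0.5) ≥ μ(x)` and
`max(μ(y), 0.5) ≥ min(μ(x → y), μ(x))`. -/
def IsBarFuzzyFilter (μ : L → ℝ) : Prop :=
  (∀ x : L, max (μ ⊤) (1/2) ≥ μ x) ∧
    ∀ x y : L, max (μ y) (1/2) ≥ min (μ (rimp x y)) (μ x)

theorem stmt_3 (μ : L → ℝ) (hμ0 : ∀ x : L, 0 ≤ μ x) (hμ1 : ∀ x : L, μ x ≤ 1) :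
    IsBarFuzzyFilter μ ↔ (∀ t : ℝ, 1/2 < t → t ≤ 1 → ({x : L | t ≤ μ x} = ∅ ∨ IsFilter' {x : L | t ≤ μ x})) := by
  constructor
  · rintro ⟨h1, h2⟩ t ht _
    rcases Set.eq_empty_or_nonempty {x : L | t ≤ μ x} with he | ⟨a, ha⟩
    · exact Or.inl he
    · refine Or.inr ⟨?_, ?_⟩
      · have := le_trans ha (h1 a)
        rcases max_cases (μ ⊤) (1/2) with ⟨h, _⟩ | ⟨h, _⟩
        · exact le_of_lt (lt_of_lt_of_le ht (h ▸ this)) |>.trans (le_refl _) |> fun _ => by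
            simp only [Set.mem_setOf_eq]; rw [h] at this; exact this
        · exfalso; rw [h] at this; linarith
      · intro x y hx hxy
        have := h2 x y
        have hmin : t ≤ min (μ (rimp x y)) (μ x) := le_min hxy hx
        have := le_trans hmin this
        simp only [Set.mem_setOf_eq]
        rcases max_cases (μ y) (1/2) with ⟨h, _⟩ | ⟨h, _⟩
        · rw [h] at this; exact this
        · exfalso; rw [h] at this; linarith
  · intro h
    constructor
    · intro x
      by_contra hc
      push_neg at hc
      set t := μ x with htdef
      have ht : 1/2 < t := lt_of_le_of_lt (le_max_right _ _) hc
      have h1 : t ≤ 1 := hμ1 x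
      rcases h t ht h1 with he | ⟨htop, _⟩
      · have : x ∈ {x : L | t ≤ μ x} := le_refl t
        rw [he] at this; exact this
      · have : μ ⊤ < t := lt_of_le_of_lt (le_max_left _ _) hc
        exact absurd htop (not_le.mpr this)
    · intro x y
      by_contra hc
      push_neg at hc
      set t := min (μ (rimp x y)) (μ x) with htdef
      have ht : 1/2 < t := lt_of_le_of_lt (le_max_right _ _) hc
      have h1 : t ≤ 1 := le_trans (min_le_right _ _) (hμ1 x)
      rcases h t ht h1 with he | ⟨_, hcl⟩
      · have : x ∈ {z : L | t ≤ μ z} := show t ≤ μ x from min_le_right _ _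
        rw [he] at this; exact this
      · have hy : y ∈ {z : L | t ≤ μ z} := hcl x y (show t ≤ μ x from min_le_right _ _) (show t ≤ μ (rimp x y) from min_le_left _ _)
        have : μ y < t := lt_of_le_of_lt (le_max_left _ _) hc
        exact absurd hy (not_le.mpr this)
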